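/- Let ω ∈ A₁, 1 < p₁, p₂ < ∞, 1/p = 1/p₁ + 1/p₂. Suppose the linear commutator [Σb⃗, 𝓜] with b⃗ = (b,b) is bounded from L^{p₁}(ω) × L^{p₂}(ω) to L^{p}(ω^{1-p}) with norm K. Then b⁻/ω ∈ L^∞ with ‖b⁻/ω‖_∞ ≤ C·K, where b⁻ = −min{b,0}. -/

import Mathlib

open MeasureTheory ENNReal NNReal

noncomputable section

abbrev Rn (n : ℕ) := Fin n → ℝ

variable {n : ℕ}

/-- A cube in ℝⁿ: a closed ball in the sup norm, with center `c` and half side-length `r`. -/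
def Cube (c : Rn n) (r : ℝ) : Set (Rn n) := Metric.closedBall c r

/-- Average of an `ℝ≥0∞`-valued function over a cube. -/
def cubeAvgE (g : Rn n → ℝ≥0∞) (c : Rn n) (r : ℝ) : ℝ≥0∞ :=
  (∫⁻ y in Cube c r, g y) / volume (Cube c r)

/-- Average of a real-valued function over a cube. -/
def cubeAvg (f : Rn n → ℝ) (c : Rn n) (r : ℝ) : ℝ :=
  (∫ y in Cube c r, f y) / (volume (Cube c r)).toReal

/-- ω-measure of a cube. -/
def wVol (ω : Rn n → ℝ) (c : Rn n) (r : ℝ) : ℝ≥0∞ :=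
  ∫⁻ y in Cube c r, ENNReal.ofReal (ω y)

/-- The bilinear Hardy–Littlewood maximal function 𝓜. -/
def biM (f₁ f₂ : Rn n → ℝ) (x : Rn n) : ℝ≥0∞ :=
  ⨆ (c : Rn n) (r : ℝ) (_ : 0 < r) (_ : x ∈ Cube c r),
    cubeAvgE (fun y => ENNReal.ofReal |f₁ y|) c r *
      cubeAvgE (fun y => ENNReal.ofReal |f₂ y|) c r

/-- The local maximal function M_{Q₀}, over subcubes of Q₀ = Cube c₀ r₀ containing x. -/
def locM (c₀ : Rn n) (r₀ : ℝ) (b : Rn n → ℝ) (x : Rn n) : ℝ≥0∞ :=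
  ⨆ (c : Rn n) (r : ℝ) (_ : 0 < r) (_ : x ∈ Cube c r) (_ : Cube c r ⊆ Cube c₀ r₀),
    cubeAvgE (fun y => ENNReal.ofReal |b y|) c r

/-- Maximal function of an `ℝ≥0∞`-valued function. -/
def eM (g : Rn n → ℝ≥0∞) (x : Rn n) : ℝ≥0∞ :=
  ⨆ (c : Rn n) (r : ℝ) (_ : 0 < r) (_ : x ∈ Cube c r), cubeAvgE g c r

/-- The Hardy–Littlewood maximal function M. -/
def HLM (f : Rn n → ℝ) : Rn n → ℝ≥0∞ := eM (fun y => ENNReal.ofReal |f y|)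

/-- The weighted maximal function M_{ω,s} = (M_ω(|f|^s))^{1/s}. -/
def wM (s : ℝ) (ω f : Rn n → ℝ) (x : Rn n) : ℝ≥0∞ :=
  (⨆ (c : Rn n) (r : ℝ) (_ : 0 < r) (_ : x ∈ Cube c r),
    (∫⁻ y in Cube c r, ENNReal.ofReal |f y| ^ s * ENNReal.ofReal (ω y)) / wVol ω c r) ^ (1 / s)

/-- Weighted L^p norm of an `ℝ≥0∞`-valued function. -/
def wNormE (p : ℝ) (ω : Rn n → ℝ) (g : Rn n → ℝ≥0∞) : ℝ≥0∞ :=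
  (∫⁻ x, g x ^ p * ENNReal.ofReal (ω x)) ^ (1 / p)

/-- Weighted L^p norm of a real-valued function. -/
def wNorm (p : ℝ) (ω f : Rn n → ℝ) : ℝ≥0∞ :=
  wNormE p ω fun x => ENNReal.ofReal |f x|

/-- Maximal commutator 𝓜^{(1)}_b. -/
def Mc1 (b f₁ f₂ : Rn n → ℝ) (x : Rn n) : ℝ≥0∞ :=
  ⨆ (c : Rn n) (r : ℝ) (_ : 0 < r) (_ : x ∈ Cube c r),
    (∫⁻ y₁ in Cube c r, ∫⁻ y₂ in Cube c r,
      ENNReal.ofReal |b x - b y₁| * (ENNReal.ofReal |f₁ y₁| * ENNReal.ofReal |f₂ y₂|)) /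
      volume (Cube c r) ^ 2

/-- Maximal commutator 𝓜^{(2)}_b. -/
def Mc2 (b f₁ f₂ : Rn n → ℝ) (x : Rn n) : ℝ≥0∞ :=
  ⨆ (c : Rn n) (r : ℝ) (_ : 0 < r) (_ : x ∈ Cube c r),
    (∫⁻ y₁ in Cube c r, ∫⁻ y₂ in Cube c r,
      ENNReal.ofReal |b x - b y₂| * (ENNReal.ofReal |f₁ y₁| * ENNReal.ofReal |f₂ y₂|)) /
      volume (Cube c r) ^ 2

/-- The maximal linear commutator 𝓜_{Σb⃗} for b⃗ = (b,b). -/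
def MSigma (b f₁ f₂ : Rn n → ℝ) (x : Rn n) : ℝ≥0∞ := Mc1 b f₁ f₂ x + Mc2 b f₁ f₂ x

/-- The maximal iterated commutator 𝓜_{Πb⃗} for b⃗ = (b,b). -/
def MPi (b f₁ f₂ : Rn n → ℝ) (x : Rn n) : ℝ≥0∞ :=
  ⨆ (c : Rn n) (r : ℝ) (_ : 0 < r) (_ : x ∈ Cube c r),
    (∫⁻ y₁ in Cube c r, ∫⁻ y₂ in Cube c r,
      ENNReal.ofReal |b x - b y₁| * ENNReal.ofReal |b x - b y₂| *
        (ENNReal.ofReal |f₁ y₁| * ENNReal.ofReal |f₂ y₂|)) /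
      volume (Cube c r) ^ 2

/-- The negative part b⁻ = -min{b,0}. -/
def bminus (b : Rn n → ℝ) (x : Rn n) : ℝ := max (-b x) 0

/-- The linear commutator [Σb⃗,𝓜] = [b,𝓜]^{(1)} + [b,𝓜]^{(2)}, b⃗ = (b,b). -/
def commSigma (b f₁ f₂ : Rn n → ℝ) (x : Rn n) : ℝ :=
  (b x * (biM f₁ f₂ x).toReal - (biM (fun y => b y * f₁ y) f₂ x).toReal) +
  (b x * (biM f₁ f₂ x).toReal - (biM f₁ (fun y => b y * f₂ y) x).toReal)

/-- The iterated commutator [Πb⃗,𝓜], b⃗ = (b,b). -/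
def commPi (b f₁ f₂ : Rn n → ℝ) (x : Rn n) : ℝ :=
  b x ^ 2 * (biM f₁ f₂ x).toReal - b x * (biM f₁ (fun y => b y * f₂ y) x).toReal
    - b x * (biM (fun y => b y * f₁ y) f₂ x).toReal
    + (biM (fun y => b y * f₁ y) (fun y => b y * f₂ y) x).toReal

/-- The weighted BMO^q(ω) norm. -/
def bmoNorm (q : ℝ) (ω b : Rn n → ℝ) : ℝ≥0∞ :=
  ⨆ (c : Rn n) (r : ℝ) (_ : 0 < r),
    ((∫⁻ y in Cube c r,
        ENNReal.ofReal |b y - cubeAvg b c r| ^ q * ENNReal.ofReal (ω y) ^ (1 - q)) /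
      wVol ω c r) ^ (1 / q)

/-- The Muckenhoupt class A₁. -/
def IsA1 (ω : Rn n → ℝ) : Prop :=
  Measurable ω ∧ (∀ x, 0 ≤ ω x) ∧ (∀ᵐ x ∂(volume : Measure (Rn n)), 0 < ω x) ∧
    LocallyIntegrable ω ∧
    ∃ C > (0 : ℝ), ∀ (c : Rn n) (r : ℝ), 0 < r →
      wVol ω c r / volume (Cube c r) ≤
        ENNReal.ofReal C * essInf (fun y => ENNReal.ofReal (ω y)) (volume.restrict (Cube c r))

/-- The Muckenhoupt class A_q, 1 < q < ∞. -/
def IsAq (q : ℝ) (ω : Rn n → ℝ) : Prop :=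
  Measurable ω ∧ (∀ x, 0 ≤ ω x) ∧ (∀ᵐ x ∂(volume : Measure (Rn n)), 0 < ω x) ∧
    LocallyIntegrable ω ∧
    ∃ C : ℝ, ∀ (c : Rn n) (r : ℝ), 0 < r →
      (wVol ω c r / volume (Cube c r)) *
        ((∫⁻ y in Cube c r, ENNReal.ofReal (ω y) ^ (-(1 / (q - 1)))) /
          volume (Cube c r)) ^ (q - 1) ≤ ENNReal.ofReal C

/-- A_∞ = ∪_{1 ≤ q < ∞} A_q. -/
def IsAinfty (ω : Rn n → ℝ) : Prop := IsA1 ω ∨ ∃ q > (1 : ℝ), IsAq q ω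

/-- The Fefferman–Stein sharp maximal function M^♯. -/
def sharpM (g : Rn n → ℝ) (x : Rn n) : ℝ≥0∞ :=
  ⨆ (c : Rn n) (r : ℝ) (_ : 0 < r) (_ : x ∈ Cube c r),
    (∫⁻ y in Cube c r, ENNReal.ofReal |g y - cubeAvg g c r|) / volume (Cube c r)

/-- M^♯_δ(g) = (M^♯(|g|^δ))^{1/δ}. -/
def sharpMd (δ : ℝ) (g : Rn n → ℝ) (x : Rn n) : ℝ≥0∞ :=
  sharpM (fun y => |g y| ^ δ) x ^ (1 / δ)

/-- The characteristic function of the cube Q = Cube c r. -/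
def chi (c : Rn n) (r : ℝ) : Rn n → ℝ := (Cube c r).indicator fun _ => 1

end

section Aux
open Metric Filter
variable {n : ℕ}

lemma cube_vol_pos {c : Rn n} {r : ℝ} (hr : 0 < r) : 0 < volume (Cube c r) :=
  measure_closedBall_pos volume c hr

lemma cube_vol_lt_top {c : Rn n} {r : ℝ} : volume (Cube c r) < ∞ :=
  measure_closedBall_lt_top

lemma chi_avg_le_one (c₀ : Rn n) (r₀ : ℝ) (c : Rn n) (r : ℝ) :
    cubeAvgE (fun y => ENNReal.ofReal |chi c₀ r₀ y|) c r ≤ 1 := by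
  apply ENNReal.div_le_of_le_mul
  rw [one_mul]
  calc ∫⁻ y in Cube c r, ENNReal.ofReal |chi c₀ r₀ y|
      ≤ ∫⁻ _ in Cube c r, (1:ℝ≥0∞) := by
        apply lintegral_mono
        intro y
        have : |chi c₀ r₀ y| ≤ 1 := by
          unfold chi
          by_cases h : y ∈ Cube c₀ r₀ <;> simp [Set.indicator_apply, h]
        simpa using ENNReal.ofReal_le_ofReal this
    _ = volume (Cube c r) := setLIntegral_one _

lemma biM_chi_eq_one {c₀ : Rn n} {r₀ : ℝ} (hr₀ : 0 < r₀) {x : Rn n}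
    (hx : dist x c₀ < r₀) : biM (chi c₀ r₀) (chi c₀ r₀) x = 1 := by
  apply le_antisymm
  · refine iSup_le fun c => iSup_le fun r => iSup_le fun _ => iSup_le fun _ => ?_
    exact mul_le_one' (chi_avg_le_one c₀ r₀ c r) (chi_avg_le_one c₀ r₀ c r)
  · set r := r₀ - dist x c₀ with hrdef
    have hr : 0 < r := by simp [hrdef]; linarith
    have hsub : Cube x r ⊆ Cube c₀ r₀ := by
      apply closedBall_subset_closedBall'
      simp [hrdef]
    have hmem : x ∈ Cube x r := mem_closedBall_self hr.le
    have havg : cubeAvgE (fun y => ENNReal.ofReal |chi c₀ r₀ y|) x r = 1 := by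
      unfold cubeAvgE
      have : ∫⁻ y in Cube x r, ENNReal.ofReal |chi c₀ r₀ y|
          = ∫⁻ _ in Cube x r, (1:ℝ≥0∞) := by
        apply setLIntegral_congr_fun measurableSet_closedBall
        intro y hy
        have : chi c₀ r₀ y = 1 := by
          unfold chi; rw [Set.indicator_of_mem (hsub hy)]
        simp [this]
      rw [this, setLIntegral_one]
      exact ENNReal.div_self (cube_vol_pos hr).ne' cube_vol_lt_top.ne
    calc (1:ℝ≥0∞) = cubeAvgE (fun y => ENNReal.ofReal |chi c₀ r₀ y|) x r *
        cubeAvgE (fun y => ENNReal.ofReal |chi c₀ r₀ y|) x r := by rw [havg, one_mul]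
      _ ≤ _ := by
        refine le_iSup_of_le x (le_iSup_of_le r (le_iSup_of_le hr (le_iSup_of_le hmem le_rfl)))

lemma pointwise_bound {b : Rn n → ℝ} {c₀ : Rn n} {r₀ : ℝ} (hr₀ : 0 < r₀) {x : Rn n}
    (hx : dist x c₀ < r₀) :
    ENNReal.ofReal (bminus b x) ≤ ENNReal.ofReal |commSigma b (chi c₀ r₀) (chi c₀ r₀) x| := by
  apply ENNReal.ofReal_le_ofReal
  unfold commSigma bminus
  rw [biM_chi_eq_one hr₀ hx]
  set A := (biM (fun y => b y * chi c₀ r₀ y) (chi c₀ r₀) x).toReal with hA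
  set B := (biM (chi c₀ r₀) (fun y => b y * chi c₀ r₀ y) x).toReal with hB
  have hA0 : 0 ≤ A := ENNReal.toReal_nonneg
  have hB0 : 0 ≤ B := ENNReal.toReal_nonneg
  rcases le_or_gt 0 (b x) with h | h
  · rw [max_eq_right (by linarith)]
    exact abs_nonneg _
  · rw [max_eq_left (by linarith)]
    have : (b x * ENNReal.toReal 1 - A) + (b x * ENNReal.toReal 1 - B) ≤ b x := by
      simp only [ENNReal.toReal_one, mul_one]; linarith
    calc -b x ≤ -((b x * ENNReal.toReal 1 - A) + (b x * ENNReal.toReal 1 - B)) := by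
          simp only [ENNReal.toReal_one, mul_one] at this ⊢; linarith
      _ ≤ |_| := neg_le_abs _

end Aux
section Aux2
open Metric Filter
variable {n : ℕ}

lemma wNorm_chi (q : ℝ) (hq : 0 < q) (ω : Rn n → ℝ) (c₀ : Rn n) (r₀ : ℝ) :
    wNorm q ω (chi c₀ r₀) = wVol ω c₀ r₀ ^ (1 / q) := by
  unfold wNorm wNormE wVol
  congr 1
  have : ∀ x, ENNReal.ofReal |chi c₀ r₀ x| ^ q * ENNReal.ofReal (ω x)
      = (Cube c₀ r₀).indicator (fun y => ENNReal.ofReal (ω y)) x := by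
    intro x
    unfold chi
    by_cases h : x ∈ Cube c₀ r₀
    · simp [Set.indicator_of_mem h, ENNReal.one_rpow]
    · simp [Set.indicator_of_notMem h, ENNReal.zero_rpow_of_pos hq]
  simp_rw [this]
  exact lintegral_indicator measurableSet_closedBall _

lemma wVol_lt_top {ω : Rn n → ℝ} (hω : LocallyIntegrable ω) (c : Rn n) (r : ℝ) :
    wVol ω c r < ∞ := by
  have hint : IntegrableOn ω (Cube c r) := hω.integrableOn_isCompact (isCompact_closedBall c r)
  have := hint.2
  unfold HasFiniteIntegral at this
  refine lt_of_le_of_lt (lintegral_mono fun y => ?_) this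
  rw [Real.enorm_eq_ofReal_abs]
  exact ENNReal.ofReal_le_ofReal (le_abs_self _)

end Aux2
section Aux3
open Metric Filter
variable {n : ℕ}

lemma central {p₁ p₂ p : ℝ} (hp₁ : 1 < p₁) (hp₂ : 1 < p₂)
    (hp : 1 / p = 1 / p₁ + 1 / p₂) {ω b : Rn n → ℝ} {K : ℝ≥0}
    (hK : ∀ f₁ f₂ : Rn n → ℝ,
      wNormE p (fun x => ω x ^ (1 - p))
          (fun x => ENNReal.ofReal |commSigma b f₁ f₂ x|) ≤
        (K : ℝ≥0∞) * wNorm p₁ ω f₁ * wNorm p₂ ω f₂)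
    (c₀ : Rn n) {r₀ : ℝ} (hr₀ : 0 < r₀) :
    ∫⁻ x in ball c₀ r₀,
        ENNReal.ofReal (bminus b x) ^ p * ENNReal.ofReal (ω x ^ (1 - p))
      ≤ (K : ℝ≥0∞) ^ p * wVol ω c₀ r₀ := by
  have p0 : 0 < p := by
    have h1 : 0 < 1 / p := by rw [hp]; positivity
    exact one_div_pos.mp h1
  have h := hK (chi c₀ r₀) (chi c₀ r₀)
  rw [wNorm_chi p₁ (by linarith) ω c₀ r₀, wNorm_chi p₂ (by linarith) ω c₀ r₀] at h
  set V := wVol ω c₀ r₀ with hV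
  have hRHS : ((K:ℝ≥0∞) * V ^ (1/p₁) * V ^ (1/p₂)) ^ p = (K:ℝ≥0∞) ^ p * V := by
    rw [ENNReal.mul_rpow_of_nonneg _ _ p0.le, ENNReal.mul_rpow_of_nonneg _ _ p0.le,
      ← ENNReal.rpow_mul, ← ENNReal.rpow_mul, mul_assoc,
      ← ENNReal.rpow_add_of_nonneg _ _ (by positivity) (by positivity)]
    have : 1 / p₁ * p + 1 / p₂ * p = 1 := by
      rw [← add_mul, ← hp]
      field_simp
    rw [this, ENNReal.rpow_one]
  have hLHS : (wNormE p (fun x => ω x ^ (1 - p))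
      (fun x => ENNReal.ofReal |commSigma b (chi c₀ r₀) (chi c₀ r₀) x|)) ^ p
      = ∫⁻ x, ENNReal.ofReal |commSigma b (chi c₀ r₀) (chi c₀ r₀) x| ^ p *
          ENNReal.ofReal (ω x ^ (1 - p)) := by
    unfold wNormE
    rw [← ENNReal.rpow_mul, one_div, inv_mul_cancel₀ p0.ne', ENNReal.rpow_one]
  calc ∫⁻ x in ball c₀ r₀,
        ENNReal.ofReal (bminus b x) ^ p * ENNReal.ofReal (ω x ^ (1 - p))
      ≤ ∫⁻ x in ball c₀ r₀,
          ENNReal.ofReal |commSigma b (chi c₀ r₀) (chi c₀ r₀) x| ^ p *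
            ENNReal.ofReal (ω x ^ (1 - p)) := by
        refine setLIntegral_mono' measurableSet_ball fun x hx => ?_
        exact mul_le_mul_left (ENNReal.rpow_le_rpow
          (pointwise_bound hr₀ (mem_ball.mp hx)) p0.le) _
    _ ≤ ∫⁻ x, ENNReal.ofReal |commSigma b (chi c₀ r₀) (chi c₀ r₀) x| ^ p *
          ENNReal.ofReal (ω x ^ (1 - p)) := setLIntegral_le_lintegral _ _
    _ = _ := hLHS.symm
    _ ≤ ((K:ℝ≥0∞) * V ^ (1/p₁) * V ^ (1/p₂)) ^ p := ENNReal.rpow_le_rpow h p0.le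
    _ = (K:ℝ≥0∞) ^ p * V := hRHS

end Aux3
open Metric Filter in
private lemma ediv_helper (t a c d : ℝ≥0∞) (t0 : t ≠ 0) (tt : t ≠ ∞) :
    a * t * (c / (t * d)) = a * c / d := by
  rw [mul_assoc, ← mul_div_assoc, ENNReal.mul_div_mul_left c d t0 tt, ← mul_div_assoc]
open Metric Filter
/-- if [Σb⃗,𝓜] is bounded L^{p₁}(ω) × L^{p₂}(ω) → L^p(ω^{1-p})
with norm K, then b⁻/ω ∈ L^∞ with ‖b⁻/ω‖_∞ ≤ C·K. -/
theorem stmt12 {n : ℕ} (p₁ p₂ p : ℝ) (hp₁ : 1 < p₁) (hp₂ : 1 < p₂)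
    (hp : 1 / p = 1 / p₁ + 1 / p₂) (ω : Rn n → ℝ) (hω : IsA1 ω)
    (b : Rn n → ℝ) (hb : LocallyIntegrable b) (K : ℝ≥0)
    (hK : ∀ f₁ f₂ : Rn n → ℝ,
      wNormE p (fun x => ω x ^ (1 - p))
          (fun x => ENNReal.ofReal |commSigma b f₁ f₂ x|) ≤
        (K : ℝ≥0∞) * wNorm p₁ ω f₁ * wNorm p₂ ω f₂) :
    ∃ C : ℝ≥0, ∀ᵐ x ∂(volume : Measure (Rn n)),
      bminus b x ≤ (C : ℝ) * (K : ℝ) * ω x := by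
  obtain ⟨hωm, hωnn, hωpos, hωloc, -⟩ := hω
  have p0 : 0 < p := by
    have h1 : 0 < 1 / p := by rw [hp]; positivity
    exact one_div_pos.mp h1
  have hbm := hb.aestronglyMeasurable
  set b₀ := hbm.mk b with hb₀def
  have hb₀m : Measurable b₀ := hbm.stronglyMeasurable_mk.measurable
  have hbe : b =ᵐ[(volume : Measure (Rn n))] b₀ := hbm.ae_eq_mk
  set F : Rn n → ℝ≥0∞ :=
    fun x => ENNReal.ofReal (bminus b x) ^ p * ENNReal.ofReal (ω x ^ (1 - p)) with hF
  set F₀ : Rn n → ℝ≥0∞ :=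
    fun x => ENNReal.ofReal (max (-(b₀ x)) 0) ^ p * ENNReal.ofReal (ω x ^ (1 - p)) with hF₀
  have hF₀m : Measurable F₀ :=
    (((hb₀m.neg.max measurable_const).ennreal_ofReal.pow measurable_const).mul
      ((hωm.pow measurable_const).ennreal_ofReal))
  have hFe : F =ᵐ[(volume : Measure (Rn n))] F₀ := by
    filter_upwards [hbe] with x hx
    simp only [hF, hF₀, bminus, hx]
  set W : Rn n → ℝ≥0∞ := fun x => ENNReal.ofReal (ω x) with hW
  have hWm : Measurable W := hωm.ennreal_ofReal
  have hKp : ((K : ℝ≥0∞)) ^ p ≠ ∞ := ENNReal.rpow_ne_top_of_nonneg p0.le ENNReal.coe_ne_top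
  have hcent : ∀ (c : Rn n) (r : ℝ), 0 < r →
      ∫⁻ x in ball c r, F₀ x ≤ (K : ℝ≥0∞) ^ p * wVol ω c r := by
    intro c r hr
    calc ∫⁻ x in ball c r, F₀ x = ∫⁻ x in ball c r, F x :=
          lintegral_congr_ae (ae_restrict_of_ae hFe.symm)
      _ ≤ _ := by
          simp only [hF]
          exact central hp₁ hp₂ hp hK c hr
  set ρ := (volume : Measure (Rn n)).withDensity F₀ with hρ
  set ν := (volume : Measure (Rn n)).withDensity W with hν
  have hν_cb : ∀ (c : Rn n) (r : ℝ), ν (closedBall c r) = wVol ω c r := by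
    intro c r
    rw [hν, withDensity_apply _ measurableSet_closedBall]
    rfl
  have instρ : IsLocallyFiniteMeasure ρ := by
    refine ⟨fun x => ⟨ball x 1, ball_mem_nhds x one_pos, ?_⟩⟩
    rw [hρ, withDensity_apply _ measurableSet_ball]
    exact lt_of_le_of_lt (hcent x 1 one_pos)
      (ENNReal.mul_lt_top hKp.lt_top (wVol_lt_top hωloc x 1))
  have instν : IsLocallyFiniteMeasure ν := by
    refine ⟨fun x => ⟨ball x 1, ball_mem_nhds x one_pos, ?_⟩⟩
    rw [hν, withDensity_apply _ measurableSet_ball]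
    refine lt_of_le_of_lt ?_ (wVol_lt_top hωloc x 1)
    exact lintegral_mono_set ball_subset_closedBall
  have hρd := Besicovitch.ae_tendsto_rnDeriv ρ (volume : Measure (Rn n))
  have hνd := Besicovitch.ae_tendsto_rnDeriv ν (volume : Measure (Rn n))
  have hρr : ρ.rnDeriv volume =ᵐ[(volume : Measure (Rn n))] F₀ :=
    Measure.rnDeriv_withDensity volume hF₀m
  have hνr : ν.rnDeriv volume =ᵐ[(volume : Measure (Rn n))] W :=
    Measure.rnDeriv_withDensity volume hWm
  have hball2 : Tendsto (fun r : ℝ => 2 * r) (nhdsWithin 0 (Set.Ioi 0))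
      (nhdsWithin 0 (Set.Ioi 0)) := by
    apply tendsto_nhdsWithin_of_tendsto_nhds_of_eventually_within
    · have h2 : Tendsto (fun r : ℝ => 2 * r) (nhds 0) (nhds (2 * 0)) :=
        (continuous_const.mul continuous_id).tendsto 0
      rw [mul_zero] at h2
      exact h2.mono_left nhdsWithin_le_nhds
    · filter_upwards [self_mem_nhdsWithin] with r hr
      exact Set.mem_Ioi.mpr (mul_pos two_pos hr)
  have t0 : ENNReal.ofReal ((2:ℝ) ^ n) ≠ 0 := by positivity
  have tt : ENNReal.ofReal ((2:ℝ) ^ n) ≠ ∞ := ENNReal.ofReal_ne_top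
  refine ⟨⟨(2:ℝ) ^ ((n:ℝ) / p), by positivity⟩, ?_⟩
  filter_upwards [hρd, hνd, hρr, hνr, hFe, hωpos] with x h1 h2 h3 h4 h5 h6
  rw [h3] at h1
  rw [h4] at h2
  have hlim2 : Tendsto (fun r : ℝ => (K:ℝ≥0∞) ^ p * ENNReal.ofReal ((2:ℝ) ^ n) *
      (ν (closedBall x (2 * r)) / volume (closedBall x (2 * r))))
      (nhdsWithin 0 (Set.Ioi 0))
      (nhds ((K:ℝ≥0∞) ^ p * ENNReal.ofReal ((2:ℝ) ^ n) * W x)) :=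
    ENNReal.Tendsto.const_mul (h2.comp hball2) (Or.inr (ENNReal.mul_ne_top hKp tt))
  have hmain : F₀ x ≤ (K:ℝ≥0∞) ^ p * ENNReal.ofReal ((2:ℝ) ^ n) * W x := by
    refine le_of_tendsto_of_tendsto h1 hlim2 ?_
    filter_upwards [self_mem_nhdsWithin] with r hr
    replace hr : 0 < r := hr
    have e2 : volume (closedBall x (2 * r))
        = ENNReal.ofReal ((2:ℝ) ^ n) * volume (closedBall x r) := by
      rw [Measure.addHaar_closedBall_mul_of_pos volume x two_pos r,
        ← Measure.addHaar_closedBall_center volume x]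
      simp [Module.finrank_fintype_fun_eq_card]
    have step : ρ (closedBall x r) ≤ (K:ℝ≥0∞) ^ p * ν (closedBall x (2 * r)) := by
      rw [hρ, withDensity_apply _ measurableSet_closedBall, hν_cb]
      calc ∫⁻ y in closedBall x r, F₀ y ≤ ∫⁻ y in ball x (2 * r), F₀ y :=
            lintegral_mono_set (closedBall_subset_ball (by linarith))
        _ ≤ _ := hcent x (2 * r) (by linarith)
    calc ρ (closedBall x r) / volume (closedBall x r)
        ≤ ((K:ℝ≥0∞) ^ p * ν (closedBall x (2 * r))) / volume (closedBall x r) :=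
          ENNReal.div_le_div_right step _
      _ = (K:ℝ≥0∞) ^ p * ENNReal.ofReal ((2:ℝ) ^ n) *
          (ν (closedBall x (2 * r)) / volume (closedBall x (2 * r))) := by
          rw [e2, ediv_helper _ _ _ _ t0 tt]
  rw [← h5] at hmain
  simp only [hF, hW] at hmain
  set m := bminus b x with hm
  have m0 : 0 ≤ m := le_max_right _ _
  have keyE : ENNReal.ofReal (m ^ p * ω x ^ (1 - p)) ≤
      ENNReal.ofReal ((K:ℝ) ^ p * 2 ^ n * ω x) := by
    calc ENNReal.ofReal (m ^ p * ω x ^ (1 - p))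
        = ENNReal.ofReal (m ^ p) * ENNReal.ofReal (ω x ^ (1 - p)) :=
          ENNReal.ofReal_mul (by positivity)
      _ = ENNReal.ofReal m ^ p * ENNReal.ofReal (ω x ^ (1 - p)) := by
          rw [ENNReal.ofReal_rpow_of_nonneg m0 p0.le]
      _ ≤ (K:ℝ≥0∞) ^ p * ENNReal.ofReal ((2:ℝ) ^ n) * ENNReal.ofReal (ω x) := hmain
      _ = ENNReal.ofReal ((K:ℝ) ^ p) * ENNReal.ofReal ((2:ℝ) ^ n) * ENNReal.ofReal (ω x) := by
          rw [← ENNReal.ofReal_coe_nnreal, ENNReal.ofReal_rpow_of_nonneg K.coe_nonneg p0.le]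
      _ = ENNReal.ofReal ((K:ℝ) ^ p * 2 ^ n * ω x) := by
          rw [← ENNReal.ofReal_mul (by positivity), ← ENNReal.ofReal_mul (by positivity)]
  have keyR : m ^ p * ω x ^ (1 - p) ≤ (K:ℝ) ^ p * 2 ^ n * ω x :=
    (ENNReal.ofReal_le_ofReal_iff (by positivity)).mp keyE
  have hsplit : (K:ℝ) ^ p * 2 ^ n * ω x ^ p * ω x ^ (1 - p) = (K:ℝ) ^ p * 2 ^ n * ω x := by
    rw [mul_assoc ((K:ℝ) ^ p * 2 ^ n), ← Real.rpow_add h6]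
    have : p + (1 - p) = 1 := by ring
    rw [this, Real.rpow_one]
  have hmp : m ^ p ≤ (K:ℝ) ^ p * 2 ^ n * ω x ^ p := by
    have hpos : 0 < ω x ^ (1 - p) := Real.rpow_pos_of_pos h6 _
    refine le_of_mul_le_mul_right ?_ hpos
    calc m ^ p * ω x ^ (1 - p) ≤ (K:ℝ) ^ p * 2 ^ n * ω x := keyR
      _ = (K:ℝ) ^ p * 2 ^ n * ω x ^ p * ω x ^ (1 - p) := hsplit.symm
  have h3' : (m ^ p) ^ p⁻¹ ≤ ((K:ℝ) ^ p * 2 ^ n * ω x ^ p) ^ p⁻¹ :=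
    Real.rpow_le_rpow (by positivity) hmp (by positivity)
  rw [Real.rpow_rpow_inv m0 p0.ne'] at h3'
  have hfinal : ((K:ℝ) ^ p * 2 ^ n * ω x ^ p) ^ p⁻¹
      = (2:ℝ) ^ ((n:ℝ) / p) * (K:ℝ) * ω x := by
    rw [Real.mul_rpow (by positivity) (by positivity),
      Real.mul_rpow (by positivity) (by positivity),
      Real.rpow_rpow_inv K.coe_nonneg p0.ne', Real.rpow_rpow_inv h6.le p0.ne',
      ← Real.rpow_natCast (2:ℝ) n, ← Real.rpow_mul (by norm_num : (0:ℝ) ≤ 2)]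
    rw [show (n:ℝ) * p⁻¹ = (n:ℝ) / p from (div_eq_mul_inv _ _).symm]
    ring
  rw [hfinal] at h3'
  exact h3'
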